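/- arXiv:2307.15082 — 2 statements merged into one kernel-verified Lean document; each statement's English description precedes it below -/
import Mathlib

section
/- The relative error of rounding to nearest is bounded by u/(1+u): for any real x in the normal range of the format, |fl(x) − x| ≤ (u/(1+u))·|x|, and this bound is attained. -/
/-- Radix-2 floating-point numbers with precision `p` (unbounded exponent range,
so every number is "normal": no subnormals or overflow intervene). -/
def FPFormat (p : ℕ) : Set ℝ :=
  {x | ∃ m e : ℤ, |m| < 2 ^ p ∧ x = (m : ℝ) * 2 ^ e}

/-- `fl` is a round-to-nearest function for the format. -/
def IsRoundNearest (p : ℕ) (fl : ℝ → ℝ) : Prop :=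
  ∀ x : ℝ, fl x ∈ FPFormat p ∧ ∀ y ∈ FPFormat p, |x - fl x| ≤ |x - y|

lemma fp_mem (p : ℕ) (hp : 1 ≤ p) (k e : ℤ) (hk : |k| ≤ 2 ^ p) :
    (k : ℝ) * 2 ^ e ∈ FPFormat p := by
  rcases lt_or_eq_of_le hk with h | h
  · exact ⟨k, e, h, rfl⟩
  · have hp' : (2:ℤ)^(p-1) * 2 = 2^p := by
      rw [← pow_succ]; congr 1; omega
    have hlt : |(2:ℤ)^(p-1)| < 2^p := by
      rw [abs_of_nonneg (by positivity)]
      nlinarith [pow_pos (by norm_num : (0:ℤ)<2) (p-1)]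
    have hre : ((2:ℤ)^p : ℝ) * 2 ^ e = ((2:ℤ)^(p-1) : ℝ) * 2 ^ (e+1) := by
      push_cast
      rw [zpow_add_one₀ (by norm_num : (2:ℝ) ≠ 0)]
      have : (2:ℝ)^(p-1) * 2 = 2^p := by
        rw [← pow_succ]; congr 1; omega
      nlinarith [this, zpow_pos (by norm_num : (0:ℝ)<2) e]
    rcases (abs_eq (by positivity : (0:ℤ) ≤ 2^p)).mp h with h | h
    · refine ⟨2^(p-1), e+1, hlt, ?_⟩
      rw [h]; exact_mod_cast hre
    · refine ⟨-2^(p-1), e+1, by simpa using hlt, ?_⟩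
      rw [h]; push_cast
      have := hre; push_cast at this; linarith [this]

lemma fp_neg_mem (p : ℕ) {y : ℝ} (hy : y ∈ FPFormat p) : -y ∈ FPFormat p := by
  obtain ⟨m, e, hm, rfl⟩ := hy
  exact ⟨-m, e, by simpa using hm, by push_cast; ring⟩

lemma key_bound (p : ℕ) (hp : 1 ≤ p) (u : ℝ) (hu : u = 2 ^ (-(p : ℤ)))
    (s : ℝ) (hs : 0 < s) :
    ∃ y ∈ FPFormat p, |s - y| ≤ (u / (1 + u)) * s := by
  have hu0 : 0 < u := by rw [hu]; positivity
  have h1u : 0 < 1 + u := by linarith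
  set L : ℤ := Int.log 2 s with hL
  have h1 : (2:ℝ)^L ≤ s := Int.zpow_log_le_self (by norm_num) hs
  have h2 : s < 2^(L+1) := Int.lt_zpow_succ_log_self (by norm_num) s
  have hLpos : (0:ℝ) < 2^L := by positivity
  by_cases hc : s ≤ 2^L * (1+u)
  · refine ⟨(2:ℝ)^L, ?_, ?_⟩
    · have hmem : ((2^(p-1) : ℤ):ℝ) * 2^(L - p + 1) = 2^L := by
        push_cast
        rw [← zpow_natCast (2:ℝ) (p-1), ← zpow_add₀ (by norm_num : (2:ℝ) ≠ 0)]
        congr 1; omega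
      rw [← hmem]
      refine ⟨2^(p-1), L - p + 1, ?_, rfl⟩
      rw [abs_of_nonneg (by positivity)]
      have hp' : (2:ℤ)^(p-1) * 2 = 2^p := by rw [← pow_succ]; congr 1; omega
      nlinarith [pow_pos (by norm_num : (0:ℤ)<2) (p-1)]
    · rw [abs_of_nonneg (by linarith), div_mul_eq_mul_div, le_div_iff₀ h1u]
      nlinarith
  · push_neg at hc
    set δ : ℝ := 2^(L - p + 1) with hδ
    have hδ0 : 0 < δ := by positivity
    set m : ℤ := ⌊s / δ⌋ with hm
    have hm0 : 0 ≤ m := Int.floor_nonneg.mpr (by positivity)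
    have hml : (m:ℝ) * δ ≤ s := by
      have := Int.floor_le (s/δ)
      calc (m:ℝ) * δ ≤ (s/δ) * δ := by nlinarith
        _ = s := by field_simp
    have hmu : s < ((m:ℝ)+1) * δ := by
      have := Int.lt_floor_add_one (s/δ)
      calc s = (s/δ) * δ := by field_simp
        _ < ((m:ℝ)+1) * δ := by nlinarith
    have hpow : (2:ℝ)^(p:ℤ) * δ = 2^(L+1) := by
      rw [hδ, ← zpow_add₀ (by norm_num : (2:ℝ) ≠ 0)]
      congr 1; ring
    have hmlt : m < 2^p := by
      have hsd : s / δ < ((2^p : ℤ) : ℝ) := by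
        rw [div_lt_iff₀ hδ0]
        push_cast
        rw [← zpow_natCast (2:ℝ) p]
        calc s < 2^(L+1) := h2
          _ = (2:ℝ)^(p:ℤ) * δ := hpow.symm
      exact_mod_cast Int.floor_lt.mpr hsd
    have hhalf : δ / 2 ≤ u / (1+u) * s := by
      have hδval : δ / 2 = u * 2^L := by
        rw [hδ, hu, ← zpow_add₀ (by norm_num : (2:ℝ) ≠ 0),
          div_eq_iff (by norm_num : (2:ℝ) ≠ 0),
          ← zpow_add_one₀ (by norm_num : (2:ℝ) ≠ 0)]
        congr 1; ring
      rw [hδval, div_mul_eq_mul_div, le_div_iff₀ h1u]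
      nlinarith
    by_cases hmid : s - (m:ℝ)*δ ≤ δ/2
    · refine ⟨(m:ℝ)*δ, ?_, ?_⟩
      · rw [hδ]
        exact fp_mem p hp m _ (by rw [abs_of_nonneg hm0]; exact hmlt.le)
      · rw [abs_of_nonneg (by linarith)]; linarith
    · refine ⟨((m:ℝ)+1)*δ, ?_, ?_⟩
      · rw [hδ]
        have hcast : ((m:ℝ)+1) = ((m+1:ℤ):ℝ) := by push_cast; ring
        rw [hcast]
        exact fp_mem p hp (m+1) _ (by rw [abs_of_nonneg (by omega)]; omega)
      · rw [abs_of_nonpos (by linarith)]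
        push_neg at hmid
        linarith

/-- The relative error of round-to-nearest is bounded by `u/(1+u)` where
`u = 2^(-p)`, and this bound is attained. -/
theorem round_nearest_relative_error (p : ℕ) (hp : 1 ≤ p) (u : ℝ)
    (hu : u = 2 ^ (-(p : ℤ))) (fl : ℝ → ℝ) (hfl : IsRoundNearest p fl) :
    (∀ x : ℝ, |fl x - x| ≤ (u / (1 + u)) * |x|) ∧
    (∃ x : ℝ, x ≠ 0 ∧ |fl x - x| = (u / (1 + u)) * |x|) := by
  have hu0 : 0 < u := by rw [hu]; positivity
  have h1u : 0 < 1 + u := by linarith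
  constructor
  · intro x
    rcases eq_or_ne x 0 with rfl | hx
    · have h0 : (0:ℝ) ∈ FPFormat p := ⟨0, 0, by positivity, by simp⟩
      have h := (hfl 0).2 0 h0
      simp only [sub_zero, abs_zero] at h
      have : fl 0 = 0 := by
        have := abs_nonneg (0 - fl 0)
        have h2 : |0 - fl 0| = 0 := le_antisymm h this
        have := abs_eq_zero.mp h2
        linarith
      simp [this]
    · have hs : 0 < |x| := abs_pos.mpr hx
      obtain ⟨y, hy, hb⟩ := key_bound p hp u hu |x| hs
      rcases lt_or_gt_of_ne hx with hneg | hpos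
      · have hy' : -y ∈ FPFormat p := fp_neg_mem p hy
        have h := (hfl x).2 (-y) hy'
        have heq : |x - -y| = abs (|x| - y) := by
          rw [abs_of_neg hneg]
          rw [show x - -y = -(-x - y) by ring, abs_neg]
        calc |fl x - x| = |x - fl x| := abs_sub_comm _ _
          _ ≤ |x - -y| := h
          _ = abs (|x| - y) := heq
          _ ≤ (u / (1 + u)) * |x| := hb
      · have h := (hfl x).2 y hy
        have heq : |x - y| = abs (|x| - y) := by rw [abs_of_pos hpos]
        calc |fl x - x| = |x - fl x| := abs_sub_comm _ _
          _ ≤ |x - y| := h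
          _ = abs (|x| - y) := heq
          _ ≤ (u / (1 + u)) * |x| := hb
  · refine ⟨1 + u, by linarith, ?_⟩
    have h1mem : (1:ℝ) ∈ FPFormat p := by
      refine ⟨1, 0, ?_, by simp⟩
      rw [abs_one]
      exact one_lt_pow₀ (by norm_num) (by omega)
    have hub : |(1 + u) - fl (1 + u)| ≤ u := by
      have h := (hfl (1 + u)).2 1 h1mem
      calc |(1 + u) - fl (1 + u)| ≤ |(1 + u) - 1| := h
        _ = u := by rw [show (1:ℝ) + u - 1 = u by ring, abs_of_pos hu0]
    have hlb : ∀ y ∈ FPFormat p, u ≤ |(1 + u) - y| := by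
      rintro y ⟨m, e, hm, rfl⟩
      by_contra hlt
      push_neg at hlt
      rw [abs_sub_lt_iff] at hlt
      obtain ⟨hA, hB⟩ := hlt
      have hy1 : 1 < (m:ℝ) * 2^e := by linarith
      have hy2 : (m:ℝ) * 2^e < 1 + 2*u := by linarith
      have hm0 : 0 < m := by
        by_contra hmc
        push_neg at hmc
        have hmr : (m:ℝ) ≤ 0 := by exact_mod_cast hmc
        have : (m:ℝ) * 2^e ≤ 0 :=
          mul_nonpos_of_nonpos_of_nonneg hmr (by positivity)
        linarith
      have hep : 1 ≤ e + p := by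
        by_contra hc
        push_neg at hc
        have he : e ≤ -(p:ℤ) := by omega
        have h2e : (2:ℝ)^e ≤ 2^(-(p:ℤ)) :=
          zpow_le_zpow_right₀ (by norm_num) he
        have hmr : (m:ℝ) < ((2^p : ℤ) : ℝ) := by exact_mod_cast lt_of_abs_lt hm
        have hmr' : (m:ℝ) < (2:ℝ)^(p:ℤ) := by
          push_cast at hmr
          rw [← zpow_natCast (2:ℝ) p] at hmr
          exact hmr
        have : (m:ℝ) * 2^e < (2:ℝ)^(p:ℤ) * 2^(-(p:ℤ)) := by
          have hm0' : (0:ℝ) < m := by exact_mod_cast hm0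
          have := zpow_pos (by norm_num : (0:ℝ) < 2) e
          nlinarith
        rw [← zpow_add₀ (by norm_num : (2:ℝ) ≠ 0)] at this
        simp at this
        linarith
      set n : ℤ := m * 2^((e + p - 1).toNat) with hn
      have hcast : (n:ℝ) = (m:ℝ) * 2^e * 2^((p:ℤ)-1) := by
        rw [hn]
        push_cast
        rw [← zpow_natCast (2:ℝ) ((e + p - 1).toNat),
          Int.toNat_of_nonneg (by omega : (0:ℤ) ≤ e + p - 1),
          mul_assoc, ← zpow_add₀ (by norm_num : (2:ℝ) ≠ 0)]
        congr 2
        ring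
      have hppos : (0:ℝ) < 2^((p:ℤ)-1) := by positivity
      have hval : 2 * u * (2:ℝ)^((p:ℤ)-1) = 1 := by
        have h12 : (2:ℝ)^(-(p:ℤ)) * 2^((p:ℤ)-1) = 2^(-1:ℤ) := by
          rw [← zpow_add₀ (by norm_num : (2:ℝ) ≠ 0)]
          congr 1; ring
        rw [hu, mul_assoc, h12]
        norm_num
      have hlow : (2:ℝ)^((p:ℤ)-1) < n := by
        rw [hcast]; nlinarith
      have hhigh : (n:ℝ) < 2^((p:ℤ)-1) + 1 := by
        rw [hcast]; nlinarith
      have hzcast : (2:ℝ)^((p:ℤ)-1) = (((2:ℤ)^(p-1) : ℤ) : ℝ) := by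
        push_cast
        rw [← zpow_natCast (2:ℝ) (p-1)]
        congr 1
        omega
      rw [hzcast] at hlow hhigh
      have hz1 : (2:ℤ)^(p-1) < n := by exact_mod_cast hlow
      have hz2 : n < (2:ℤ)^(p-1) + 1 := by exact_mod_cast hhigh
      omega
    have heq : |(1 + u) - fl (1 + u)| = u :=
      le_antisymm hub (hlb _ (hfl _).1)
    rw [abs_sub_comm] at heq
    rw [heq, abs_of_pos (by linarith : (0:ℝ) < 1 + u),
      div_mul_cancel₀ _ (by linarith : (1:ℝ) + u ≠ 0)]
end

section
/- Error-free transformation for addition (Fast2Sum): if a and b are floating-point numbers with |a| ≥ |b|, and s = fl(a+b), t = fl(b − fl(s − a)), then s + t = a + b exactly, i.e., t is exactly the rounding error of the floating-point addition. -/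
private lemma zsplit (n m : ℤ) (h : n ≤ m) : (2:ℝ)^m = (2:ℝ)^((m-n).toNat) * 2^n := by
  have h1 : ((m-n).toNat : ℤ) = m - n := Int.toNat_of_nonneg (by omega)
  rw [← zpow_natCast (2:ℝ) (m-n).toNat, h1, ← zpow_add₀ (two_ne_zero)]
  congr 1; ring

private lemma zpow_pos' (e : ℤ) : (0:ℝ) < 2 ^ e := zpow_pos (by norm_num) e

private lemma mem_fmt {p : ℕ} (hp : 1 ≤ p) {k g : ℤ} (h : |k| ≤ 2 ^ p) :
    (k : ℝ) * 2 ^ g ∈ FPFormat p := by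
  have hpow : (2:ℝ)^(p-1) * 2 = 2^p := by
    rw [← pow_succ, show p-1+1 = p by omega]
  rcases lt_or_eq_of_le h with h | h
  · exact ⟨k, g, h, rfl⟩
  · rcases (abs_eq (pow_nonneg (by norm_num) p)).1 h with hk | hk
    · refine ⟨2^(p-1), g+1, ?_, ?_⟩
      · rw [abs_of_nonneg (by positivity)]
        exact pow_lt_pow_right₀ (by norm_num) (by omega)
      · push_cast [hk]
        rw [zpow_add₀ (two_ne_zero (α := ℝ)), zpow_one]
        linear_combination (-(2:ℝ)^g) * hpow
    · refine ⟨-2^(p-1), g+1, ?_, ?_⟩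
      · rw [abs_neg, abs_of_nonneg (by positivity)]
        exact pow_lt_pow_right₀ (by norm_num) (by omega)
      · push_cast [hk]
        rw [zpow_add₀ (two_ne_zero (α := ℝ)), zpow_one]
        linear_combination ((2:ℝ)^g) * hpow

private lemma fl_id {p : ℕ} {fl : ℝ → ℝ} (hfl : IsRoundNearest p fl) {x : ℝ}
    (hx : x ∈ FPFormat p) : fl x = x := by
  have h := (hfl x).2 x hx
  rw [sub_self, abs_zero] at h
  have h0 : |x - fl x| = 0 := le_antisymm h (abs_nonneg _)
  exact (sub_eq_zero.mp (abs_eq_zero.1 h0)).symm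

private lemma half_ulp {p : ℕ} (hp : 1 ≤ p) {fl : ℝ → ℝ} (hfl : IsRoundNearest p fl)
    (x : ℝ) {M E : ℤ} (hM : |M| < 2 ^ p) (hrep : fl x = (M : ℝ) * 2 ^ E) :
    |x - fl x| ≤ 2 ^ (E - 1) := by
  rcases abs_lt.1 hM with ⟨hMl, hMr⟩
  have hM1 : |M + 1| ≤ 2 ^ p := by rw [abs_le]; omega
  have hM2 : |M - 1| ≤ 2 ^ p := by rw [abs_le]; omega
  have h1 := (hfl x).2 (((M+1 : ℤ):ℝ) * 2^E) (mem_fmt hp hM1)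
  have h2 := (hfl x).2 (((M-1 : ℤ):ℝ) * 2^E) (mem_fmt hp hM2)
  have hE : (0:ℝ) < 2 ^ E := zpow_pos' E
  have hE2 : (2:ℝ) ^ (E - 1) = 2 ^ E / 2 := by
    rw [zpow_sub₀ (two_ne_zero (α := ℝ))]; norm_num
  set d := x - fl x with hd
  push_cast at h1 h2
  have e1 : x - (((M:ℝ) + 1) * 2 ^ E) = d - 2 ^ E := by rw [hd, hrep]; ring
  have e2 : x - (((M:ℝ) - 1) * 2 ^ E) = d + 2 ^ E := by rw [hd, hrep]; ring
  rw [e1] at h1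
  rw [e2] at h2
  have q1 : d ^ 2 ≤ (d - 2 ^ E) ^ 2 := by
    have := pow_le_pow_left₀ (abs_nonneg d) h1 2
    simpa [sq_abs] using this
  have q2 : d ^ 2 ≤ (d + 2 ^ E) ^ 2 := by
    have := pow_le_pow_left₀ (abs_nonneg d) h2 2
    simpa [sq_abs] using this
  rw [hE2, abs_le]
  constructor <;> nlinarith [hE]

private lemma grid {p : ℕ} (hp : 1 ≤ p) {fl : ℝ → ℝ} (hfl : IsRoundNearest p fl)
    (x : ℝ) (c : ℤ) (h : |x| ≤ 2 ^ ((p:ℤ) + c)) :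
    |x - fl x| ≤ 2 ^ (c - 1) := by
  have hc : (0:ℝ) < 2 ^ c := zpow_pos' c
  set n : ℤ := round (x / 2 ^ c) with hn
  have hround : |x / 2 ^ c - (n:ℝ)| ≤ 1 / 2 := abs_sub_round _
  have h2c : (2:ℝ)^(c-1) = 2^c/2 := by
    rw [zpow_sub₀ (two_ne_zero (α := ℝ))]; norm_num
  have hxy : |x - (n : ℝ) * 2 ^ c| ≤ 2 ^ (c - 1) := by
    have e : x - (n:ℝ) * 2 ^ c = (x / 2 ^ c - n) * 2 ^ c := by field_simp
    rw [e, abs_mul, abs_of_pos hc, h2c]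
    nlinarith [abs_nonneg (x / 2 ^ c - (n:ℝ))]
  have hnb : |n| ≤ 2 ^ p := by
    have h2 : |x| / 2 ^ c ≤ (2:ℝ)^p := by
      rw [div_le_iff₀ hc]
      calc |x| ≤ 2 ^ ((p:ℤ) + c) := h
        _ = (2:ℝ)^p * 2^c := by
            rw [zpow_add₀ (two_ne_zero (α := ℝ)), zpow_natCast]
    have h1 : |(n:ℝ)| ≤ |x / 2 ^ c| + 1/2 := by
      have := abs_sub_abs_le_abs_sub (n:ℝ) (x / 2^c)
      rw [abs_sub_comm] at this
      linarith
    rw [abs_div, abs_of_pos hc] at h1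
    have h3 : |(n:ℝ)| ≤ (2:ℝ)^p + 1/2 := by linarith
    by_contra hcon
    push_neg at hcon
    have : ((2:ℤ)^p + 1 : ℤ) ≤ |n| := by omega
    have h4 : ((2:ℝ)^p + 1 : ℝ) ≤ |(n:ℝ)| := by exact_mod_cast this
    linarith
  calc |x - fl x| ≤ |x - (n:ℝ) * 2 ^ c| := (hfl x).2 _ (mem_fmt hp hnb)
    _ ≤ 2 ^ (c - 1) := hxy

private lemma fl_mult {p : ℕ} (hp : 1 ≤ p) {fl : ℝ → ℝ} (hfl : IsRoundNearest p fl)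
    {x : ℝ} {K g : ℤ} (hx : x = (K : ℝ) * 2 ^ g) : ∃ j : ℤ, fl x = (j : ℝ) * 2 ^ g := by
  obtain ⟨M, E, hM, hrep⟩ := (hfl x).1
  rcases le_or_gt g E with hEg | hEg
  · refine ⟨M * 2 ^ (E - g).toNat, ?_⟩
    rw [hrep, zsplit g E hEg]; push_cast; ring
  · have herr : |x - fl x| ≤ 2 ^ (E - 1) := half_ulp hp hfl x hM hrep
    have hxs : x - fl x = ((K * 2 ^ (g - E).toNat - M : ℤ) : ℝ) * 2 ^ E := by
      rw [hrep]
      rw [hx, zsplit E g hEg.le]; push_cast; ring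
    set i : ℤ := K * 2 ^ (g - E).toNat - M with hi
    have hi0 : i = 0 := by
      by_contra hcon
      have h1 : (1:ℝ) ≤ |(i:ℝ)| := by exact_mod_cast Int.one_le_abs (by omega)
      have h2 : |x - fl x| = |(i:ℝ)| * 2 ^ E := by
        rw [hxs, abs_mul, abs_of_pos (zpow_pos' E)]
      have h3 : (2:ℝ) ^ (E-1) < 2 ^ E := by
        apply zpow_lt_zpow_right₀ (by norm_num) (by omega)
      nlinarith [zpow_pos' E]
    have hz : x - fl x = 0 := by rw [hxs, hi0]; norm_num
    exact ⟨K, by rw [← hx]; linarith⟩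

private lemma abs_int_mul_pow (k g : ℤ) : |(k:ℝ) * 2^g| = |(k:ℝ)| * 2^g := by
  rw [abs_mul, abs_of_pos (zpow_pos' g)]

/-- Fast2Sum: if `|b| ≤ |a|`, `s = fl(a+b)`, `z = fl(s-a)`, `t = fl(b-z)`,
then `s + t = a + b` exactly: `t` is exactly the rounding error of the addition. -/
theorem fast2sum (p : ℕ) (hp : 1 ≤ p) (fl : ℝ → ℝ) (hfl : IsRoundNearest p fl)
    (a b s z t : ℝ) (ha : a ∈ FPFormat p) (hb : b ∈ FPFormat p)
    (hab : |b| ≤ |a|)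
    (hs : s = fl (a + b)) (hz : z = fl (s - a)) (ht : t = fl (b - z)) :
    s + t = a + b := by
  obtain ⟨ma, ea, hma, haeq⟩ := ha
  obtain ⟨mb0, eb0, hmb0, hbeq0⟩ := hb
  -- normalize so that b's exponent e satisfies e ≤ ea
  obtain ⟨mb, e, hmb, hbeq, hee⟩ :
      ∃ mb e : ℤ, |mb| < 2^p ∧ b = (mb:ℝ) * 2^e ∧ e ≤ ea := by
    rcases le_or_gt eb0 ea with h | h
    · exact ⟨mb0, eb0, hmb0, hbeq0, h⟩
    · refine ⟨mb0 * 2^(eb0 - ea).toNat, ea, ?_, ?_, le_refl _⟩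
      · have hbc : b = ((mb0 * 2^(eb0 - ea).toNat : ℤ) : ℝ) * 2^ea := by
          rw [hbeq0, zsplit ea eb0 h.le]; push_cast; ring
        have h1 : |((mb0 * 2^(eb0 - ea).toNat : ℤ) : ℝ)| * 2^ea ≤ |(ma:ℝ)| * 2^ea := by
          rw [← abs_int_mul_pow, ← abs_int_mul_pow, ← hbc, ← haeq]; exact hab
        have h2 : |((mb0 * 2^(eb0 - ea).toNat : ℤ) : ℝ)| ≤ |(ma:ℝ)| :=
          le_of_mul_le_mul_right h1 (zpow_pos' ea)
        have h3 : |mb0 * 2^(eb0 - ea).toNat| ≤ |ma| := by exact_mod_cast h2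
        omega
      · rw [hbeq0, zsplit ea eb0 h.le]; push_cast; ring
  clear hmb0 hbeq0
  set x := a + b with hx
  have hKx : x = ((ma * 2^(ea - e).toNat + mb : ℤ) : ℝ) * 2^e := by
    rw [hx, haeq, hbeq, zsplit e ea hee]; push_cast; ring
  set K : ℤ := ma * 2^(ea - e).toNat + mb with hK
  obtain ⟨J, hJ⟩ := fl_mult hp hfl hKx
  rw [← hs] at hJ
  -- basic bounds
  have hpe : (0:ℝ) < 2^e := zpow_pos' e
  have hmbR : |(mb:ℝ)| ≤ 2^p - 1 := by
    have h : (|mb| : ℤ) ≤ 2^p - 1 := by omega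
    have h' : ((|mb| : ℤ) : ℝ) ≤ ((2^p - 1 : ℤ) : ℝ) := by exact_mod_cast h
    push_cast at h'; linarith
  have hmaR : |(ma:ℝ)| ≤ 2^p - 1 := by
    have h : (|ma| : ℤ) ≤ 2^p - 1 := by omega
    have h' : ((|ma| : ℤ) : ℝ) ≤ ((2^p - 1 : ℤ) : ℝ) := by exact_mod_cast h
    push_cast at h'; linarith
  have hbB : |b| ≤ ((2:ℝ)^p - 1) * 2^e := by
    rw [hbeq, abs_int_mul_pow]
    exact mul_le_mul_of_nonneg_right hmbR hpe.le
  have herr_b : |x - s| ≤ |b| := by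
    rw [hs]
    have h := (hfl x).2 a ⟨ma, ea, hma, haeq⟩
    calc |x - fl x| = |x - fl (a + b)| := by rw [hx]
      _ ≤ |x - a| := by rw [← hx]; exact h
      _ = |b| := by rw [hx]; congr 1; ring
  -- (C) : x - s is representable
  have hC : x - s ∈ FPFormat p := by
    refine ⟨K - J, e, ?_, by rw [hKx, hJ]; push_cast; ring⟩
    have h1 : |((K - J : ℤ):ℝ)| * 2^e ≤ ((2:ℝ)^p - 1) * 2^e := by
      rw [← abs_int_mul_pow]
      calc |((K - J : ℤ):ℝ) * 2^e| = |x - s| := by rw [hKx, hJ]; congr 1; push_cast; ring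
        _ ≤ |b| := herr_b
        _ ≤ _ := hbB
    have h2 : |((K - J : ℤ):ℝ)| ≤ (2:ℝ)^p - 1 := le_of_mul_le_mul_right h1 hpe
    have h3 : ((|K - J| : ℤ) : ℝ) < ((2^p : ℤ) : ℝ) := by push_cast; push_cast at h2; linarith
    exact_mod_cast h3
  -- (B) : s - a is representable
  have hsaB : |s - a| ≤ 2 * |b| := by
    have h0 : s - a = -(x - s) + b := by rw [hx]; ring
    calc |s - a| = |(-(x - s)) + b| := by rw [h0]
      _ ≤ |(-(x - s))| + |b| := abs_add_le _ _
      _ = |x - s| + |b| := by rw [abs_neg]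
      _ ≤ 2 * |b| := by linarith
  have hB : s - a ∈ FPFormat p := by
    have hsa : s - a = ((J - ma * 2^(ea - e).toNat : ℤ):ℝ) * 2^e := by
      rw [hJ, haeq, zsplit e ea hee]; push_cast; ring
    rcases le_or_gt |J - ma * 2^(ea - e).toNat| (2^p) with hkle | hkgt
    · rw [hsa]; exact mem_fmt hp hkle
    · -- |k| ≥ 2^p + 1 : large error case
      have hkR : ((2:ℝ)^p + 1) * 2^e ≤ |s - a| := by
        have h1 : ((2^p + 1 : ℤ) : ℝ) ≤ ((|J - ma * 2^(ea - e).toNat| : ℤ) : ℝ) := by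
          exact_mod_cast hkgt
        push_cast at h1
        rw [hsa, abs_int_mul_pow]
        push_cast
        nlinarith
      have herr2 : 2 * 2^e ≤ |x - s| := by
        have := abs_sub_abs_le_abs_sub (s - a) b
        have hxs : (s - a) - b = -(x - s) := by rw [hx]; ring
        rw [hxs, abs_neg] at this
        nlinarith [hbB, hkR]
      rcases eq_or_lt_of_le hee with heq | hlt
      · -- ea = e : grid bound contradicts the large error
        exfalso
        have hxB : |x| ≤ 2 ^ ((p:ℤ) + (e + 1)) := by
          have haB : |a| ≤ ((2:ℝ)^p - 1) * 2^e := by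
            rw [haeq, ← heq, abs_int_mul_pow]
            exact mul_le_mul_of_nonneg_right hmaR hpe.le
          have hxab : |x| ≤ |a| + |b| := by rw [hx]; exact abs_add_le _ _
          have hsplit : (2:ℝ) ^ ((p:ℤ) + (e + 1)) = 2^p * 2^e * 2 := by
            rw [zpow_add₀ (two_ne_zero (α := ℝ)), zpow_add₀ (two_ne_zero (α := ℝ)),
              zpow_natCast, zpow_one]
            ring
          rw [hsplit]
          nlinarith
        have hg := grid hp hfl x (e + 1) hxB
        rw [show e + 1 - 1 = e by ring, ← hs] at hg
        nlinarith
      · -- e + 1 ≤ ea : s is a multiple of 2^(e+1)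
        obtain ⟨M, E, hM, hrep⟩ := (hfl x).1
        rcases le_or_gt E e with hEe | hEe
        · exfalso
          have hhu := half_ulp hp hfl x hM hrep
          have hle : (2:ℝ)^(E - 1) ≤ 2^(e - 1) :=
            zpow_le_zpow_right₀ (by norm_num) (by omega)
          have hlt' : (2:ℝ)^(e - 1) < 2^e := zpow_lt_zpow_right₀ (by norm_num) (by omega)
          rw [← hs] at hhu
          linarith
        · -- e + 1 ≤ E : rewrite s - a with exponent e + 1
          have hE1 : e + 1 ≤ E := hEe
          have hea1 : e + 1 ≤ ea := hlt
          have hsE : s = (M:ℝ) * 2^E := by rw [hs]; exact hrep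
          have hsa' : s - a =
              ((M * 2^(E - (e+1)).toNat - ma * 2^(ea - (e+1)).toNat : ℤ):ℝ) * 2^(e+1) := by
            rw [hsE, haeq, zsplit (e+1) E hE1, zsplit (e+1) ea hea1]; push_cast; ring
          have hpe1 : (0:ℝ) < 2^(e+1) := zpow_pos' (e+1)
          have h2e : (2:ℝ)^(e+1) = 2^e * 2 := by
            rw [zpow_add₀ (two_ne_zero (α := ℝ)), zpow_one]
          have h1 : |((M * 2^(E - (e+1)).toNat - ma * 2^(ea - (e+1)).toNat : ℤ):ℝ)| * 2^(e+1)
              ≤ ((2:ℝ)^p - 1) * 2^(e+1) := by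
            rw [← abs_int_mul_pow, ← hsa', h2e]
            linarith [hsaB, hbB]
          have h2 : |((M * 2^(E - (e+1)).toNat - ma * 2^(ea - (e+1)).toNat : ℤ):ℝ)|
              ≤ (2:ℝ)^p - 1 := le_of_mul_le_mul_right h1 hpe1
          have h3 : ((|M * 2^(E - (e+1)).toNat - ma * 2^(ea - (e+1)).toNat| : ℤ) : ℝ)
              < ((2^p : ℤ) : ℝ) := by push_cast; push_cast at h2; linarith
          exact ⟨_, e + 1, by exact_mod_cast h3, hsa'⟩
  -- conclude
  have hz' : z = s - a := by rw [hz, fl_id hfl hB]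
  have ht' : t = x - s := by
    have hbz : b - z = x - s := by rw [hz', hx]; ring
    rw [ht, hbz, fl_id hfl hC]
  rw [ht', hx]
  ring
end
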